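/- arXiv:2209.14703 — 8 statements merged into one kernel-verified Lean document; each statement's English description precedes it below -/
import Mathlib

section
/- In any execution s_0, s_1, …, s_T of Algorithm 1 (the lattice linear minimal dominating set algorithm), each node changes its local state at most once; that is, for each vertex i there is at most one index t < T with s_{t+1}(i) ≠ s_t(i). In particular, no node ever returns to a local state it previously left. -/
variable {V : Type*} [Fintype V] [DecidableEq V]

/-- `i` is IN and every vertex of its closed neighborhood is dominated even without `i`. -/
def Removable (G : SimpleGraph V) (s : V → Bool) (i : V) : Prop :=
  s i = true ∧ ∀ j, (j = i ∨ G.Adj i j) →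
    ((j ≠ i ∧ s j = true) ∨ ∃ k, G.Adj j k ∧ k ≠ i ∧ s k = true)

/-- `i` is OUT and all its neighbors are OUT. -/
def Addable (G : SimpleGraph V) (s : V → Bool) (i : V) : Prop :=
  s i = false ∧ ∀ j, G.Adj i j → s j = false

def Unsatisfied (G : SimpleGraph V) (s : V → Bool) (i : V) : Prop :=
  Removable G s i ∨ Addable G s i

/-- `j ≠ i` is within two hops of `i`. -/
def Adj2 (G : SimpleGraph V) (i j : V) : Prop :=
  j ≠ i ∧ (G.Adj i j ∨ ∃ k, G.Adj i k ∧ G.Adj k j)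

def Forbidden (G : SimpleGraph V) (id : V → ℕ) (s : V → Bool) (i : V) : Prop :=
  Unsatisfied G s i ∧ ∀ j, Adj2 G i j → (¬ Unsatisfied G s j ∨ id i > id j)

/-- One step of Algorithm 1: a forbidden node flips its state, all others unchanged. -/
def Move (G : SimpleGraph V) (id : V → ℕ) (s s' : V → Bool) : Prop :=
  ∃ i, Forbidden G id s i ∧ s' i = !(s i) ∧ ∀ j, j ≠ i → s' j = s j

lemma move_eq_of_ne {G : SimpleGraph V} {id : V → ℕ} {s s' : V → Bool} (h : Move G id s s')
    {i : V} (hne : s' i ≠ s i) : Forbidden G id s i ∧ ∀ j, j ≠ i → s' j = s j := by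
  obtain ⟨z, hz, hflip, hoth⟩ := h
  by_cases hzi : z = i
  · subst hzi; exact ⟨hz, hoth⟩
  · exact absurd (hoth i (fun hc => hzi hc.symm)) hne

lemma const_seq (seq : ℕ → V → Bool) (j : V) :
    ∀ a b, a ≤ b → (∀ u, a ≤ u → u < b → seq (u+1) j = seq u j) → seq b j = seq a j := by
  intro a b hab
  induction b, hab using Nat.le_induction with
  | base => intro _; rfl
  | succ n hn ih =>
    intro h
    rw [h n hn (Nat.lt_succ_self n), ih (fun u hu hub => h u hu (hub.trans (Nat.lt_succ_self n)))]

lemma first_flip (seq : ℕ → V → Bool) (j : V) (a b : ℕ) (hab : a ≤ b)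
    (hne : seq b j ≠ seq a j) :
    ∃ u, a ≤ u ∧ u < b ∧ seq (u+1) j ≠ seq u j ∧ seq u j = seq a j := by
  induction b, hab using Nat.le_induction with
  | base => exact absurd rfl hne
  | succ n hn ih =>
    by_cases h : seq n j = seq a j
    · exact ⟨n, hn, Nat.lt_succ_self n, fun hc => hne (hc.trans h), h⟩
    · obtain ⟨u, h1, h2, h3, h4⟩ := ih h
      exact ⟨u, h1, h2.trans (Nat.lt_succ_self n), h3, h4⟩

lemma no_consec (G : SimpleGraph V) (id : V → ℕ) (T : ℕ) (seq : ℕ → V → Bool)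
    (hexec : ∀ t, t < T → Move G id (seq t) (seq (t + 1)))
    (i : V) (t t' : ℕ) (ht' : t' < T) (htt' : t < t')
    (hflip : seq (t+1) i ≠ seq t i) (hflip' : seq (t'+1) i ≠ seq t' i)
    (hbet : ∀ u, t < u → u < t' → seq (u+1) i = seq u i) : False := by
  have ht : t < T := htt'.trans ht'
  obtain ⟨hF, hoth⟩ := move_eq_of_ne (hexec t ht) hflip
  obtain ⟨hF', _⟩ := move_eq_of_ne (hexec t' ht') hflip'
  have hU : Unsatisfied G (seq t) i := hF.1
  have hU' : Unsatisfied G (seq t') i := hF'.1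
  have hconst : ∀ u, t+1 ≤ u → u ≤ t' → seq u i = seq (t+1) i := by
    intro u hu1 hu2
    exact const_seq seq i (t+1) u hu1
      (fun v hv hvu => hbet v (by omega) (by omega))
  cases hsi : seq t i with
  | false =>
    have hA : Addable G (seq t) i := by
      rcases hU with hR | hA
      · rw [hR.1] at hsi; exact absurd hsi (by simp)
      · exact hA
    have hi1 : seq (t+1) i = true := by
      revert hflip; rw [hsi]; cases seq (t+1) i <;> simp
    have hti' : seq t' i = true := (hconst t' (by omega) le_rfl).trans hi1
    have hR' : Removable G (seq t') i := by
      rcases hU' with hR | hA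
      · exact hR
      · rw [hA.1] at hti'; exact absurd hti' (by simp)
    rcases hR'.2 i (Or.inl rfl) with ⟨hne, _⟩ | ⟨k, hik, hki, hkt'⟩
    · exact hne rfl
    · have hik' : G.Adj i k := hik
      have hk1 : seq (t+1) k = false := by
        rw [hoth k hki]; exact hA.2 k hik'
      have hkne : seq t' k ≠ seq (t+1) k := by rw [hkt', hk1]; simp
      obtain ⟨u, hu1, hu2, hu3, hu4⟩ := first_flip seq k (t+1) t' (by omega) hkne
      obtain ⟨hFk, _⟩ := move_eq_of_ne (hexec u (by omega)) hu3
      rcases hFk.1 with hRk | hAk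
      · rw [hRk.1, hk1] at hu4; exact absurd hu4 (by simp)
      · have h1 : seq u i = false := hAk.2 i hik'.symm
        have h2 : seq u i = true := (hconst u hu1 (le_of_lt hu2)).trans hi1
        rw [h1] at h2; exact absurd h2 (by simp)
  | true =>
    have hR : Removable G (seq t) i := by
      rcases hU with hR | hA
      · exact hR
      · rw [hA.1] at hsi; exact absurd hsi (by simp)
    have hi1 : seq (t+1) i = false := by
      revert hflip; rw [hsi]; cases seq (t+1) i <;> simp
    rcases hR.2 i (Or.inl rfl) with ⟨hne, _⟩ | ⟨k, hik, hki, hkt⟩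
    · exact hne rfl
    · have hk1 : seq (t+1) k = true := by rw [hoth k hki]; exact hkt
      have hti' : seq t' i = false := (hconst t' (by omega) le_rfl).trans hi1
      have hA' : Addable G (seq t') i := by
        rcases hU' with hR' | hA'
        · rw [hR'.1] at hti'; exact absurd hti' (by simp)
        · exact hA'
      have inv : ∀ v, t+1 ≤ v → v ≤ t' → ∃ m, G.Adj i m ∧ seq v m = true := by
        intro v hv1
        induction v, hv1 using Nat.le_induction with
        | base => exact fun _ => ⟨k, hik, hk1⟩
        | succ n hn ih =>
          intro hn2
          obtain ⟨m, him, hm⟩ := ih (by omega)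
          obtain ⟨z, hz, hzf, hzoth⟩ := hexec n (by omega)
          by_cases hzm : z = m
          · subst hzm
            rcases hz.1 with hRm | hAm
            · rcases hRm.2 i (Or.inr him.symm) with ⟨_, hsi'⟩ | ⟨m', him', hm'm, hm't⟩
              · have : seq n i = false := (hconst n hn (by omega)).trans hi1
                rw [this] at hsi'; exact absurd hsi' (by simp)
              · exact ⟨m', him', by rw [hzoth m' hm'm]; exact hm't⟩
            · rw [hAm.1] at hm; exact absurd hm (by simp)
          · exact ⟨m, him, by rw [hzoth m (fun hc => hzm hc.symm)]; exact hm⟩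
      obtain ⟨m, him, hm⟩ := inv t' (by omega) le_rfl
      have := hA'.2 m him
      rw [this] at hm; exact absurd hm (by simp)

/-- In any execution of Algorithm 1, each node changes its local state at most once:
for each vertex `i` there is at most one index `t < T` with `seq (t+1) i ≠ seq t i`. -/
theorem each_node_moves_at_most_once
    (G : SimpleGraph V) (id : V → ℕ) (hid : Function.Injective id)
    (T : ℕ) (seq : ℕ → V → Bool)
    (hexec : ∀ t, t < T → Move G id (seq t) (seq (t + 1))) :
    ∀ i : V, ∀ t₁ t₂ : ℕ, t₁ < T → t₂ < T →
      seq (t₁ + 1) i ≠ seq t₁ i → seq (t₂ + 1) i ≠ seq t₂ i → t₁ = t₂ := by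
  intro i t₁ t₂ h1 h2 hf1 hf2
  by_contra hne
  have key : ∀ a b : ℕ, a < b → b < T → seq (a+1) i ≠ seq a i → seq (b+1) i ≠ seq b i → False := by
    intro a b hab hbT hfa hfb
    classical
    have hex : ∃ u, a < u ∧ seq (u+1) i ≠ seq u i ∧ u ≤ b := ⟨b, hab, hfb, le_rfl⟩
    obtain ⟨hu0a, hu0f, hu0b⟩ := Nat.find_spec hex
    exact no_consec G id T seq hexec i a (Nat.find hex) (lt_of_le_of_lt hu0b hbT) hu0a hfa hu0f
      (fun v hv1 hv2 => by
        by_contra hc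
        have hle := Nat.find_le (h := hex) ⟨hv1, hc, le_trans (le_of_lt hv2) hu0b⟩
        omega)
  rcases Nat.lt_trichotomy t₁ t₂ with h | h | h
  · exact key t₁ t₂ h h2 hf1 hf2
  · exact hne h
  · exact key t₂ t₁ h h1 hf2 hf1
end

section
/- If two distinct vertices i and j are both Forbidden in the same state s, then j ∉ Adj²_i; that is, any two distinct Forbidden vertices are at graph distance greater than 2 from each other. -/
variable {V : Type*} [Fintype V] [DecidableEq V]

/-- Two distinct vertices forbidden in the same state are at distance greater than 2. -/
theorem forbidden_vertices_far_apart
    (G : SimpleGraph V) (id : V → ℕ) (hid : Function.Injective id)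
    (s : V → Bool) (i j : V) (hij : i ≠ j)
    (hi : Forbidden G id s i) (hj : Forbidden G id s j) :
    ¬ Adj2 G i j := by
  rintro h
  have hji : Adj2 G j i := by
    obtain ⟨hne, h' | ⟨k, hik, hkj⟩⟩ := h
    · exact ⟨hij, Or.inl h'.symm⟩
    · exact ⟨hij, Or.inr ⟨k, hkj.symm, hik.symm⟩⟩
  have h1 := hi.2 j h
  have h2 := hj.2 i hji
  rcases h1 with h1 | h1
  · exact h1 hj.1
  rcases h2 with h2 | h2
  · exact h2 hi.1
  omega
end

section
/- If vertex j satisfies Forbidden(j,s) and Removable(j,s) in state s, and s' is the state obtained from s by flipping j to OUT (s'(j) = false, s'(k) = s(k) for k ≠ j), then every vertex that is dominated in s is still dominated in s'; here a vertex v is dominated in a state s iff s(v) = true or some neighbor k of v has s(k) = true. -/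
variable {V : Type*} [Fintype V] [DecidableEq V]

/-- `v` is dominated in state `s`. -/
def Dominated (G : SimpleGraph V) (s : V → Bool) (v : V) : Prop :=
  s v = true ∨ ∃ k, G.Adj v k ∧ s k = true

/-- When a forbidden removable vertex moves OUT, every dominated vertex stays dominated. -/
theorem removable_flip_preserves_domination
    (G : SimpleGraph V) (id : V → ℕ) (hid : Function.Injective id)
    (s : V → Bool) (j : V)
    (hf : Forbidden G id s j) (hr : Removable G s j)
    (s' : V → Bool) (hs'j : s' j = false) (hs' : ∀ k, k ≠ j → s' k = s k) :
    ∀ v : V, Dominated G s v → Dominated G s' v := by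
  intro v hv
  have key : ∀ w, (w = j ∨ G.Adj j w) → Dominated G s' w := by
    intro w hw
    rcases hr.2 w hw with ⟨hwj, hsw⟩ | ⟨k, hadj, hkj, hsk⟩
    · exact Or.inl ((hs' w hwj).trans hsw)
    · exact Or.inr ⟨k, hadj, (hs' k hkj).trans hsk⟩
  rcases hv with hv | ⟨k, hadj, hsk⟩
  · by_cases hvj : v = j
    · exact key v (Or.inl hvj)
    · exact Or.inl ((hs' v hvj).trans hv)
  · by_cases hkj : k = j
    · exact key v (Or.inr (hkj ▸ hadj.symm))
    · exact Or.inr ⟨k, hadj, (hs' k hkj).trans hsk⟩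
end

section
/- If vertex i satisfies Forbidden(i,s) and Removable(i,s) in state s, and s' is the state obtained from s by flipping i to OUT (s'(i) = false, s'(j) = s(j) for j ≠ i), then Unsatisfied(i,s') is false; that is, after moving OUT, i is neither Removable nor Addable in s'. -/
variable {V : Type*} [Fintype V] [DecidableEq V]

/-- After a forbidden removable vertex moves OUT, it is no longer unsatisfied. -/
theorem removable_flip_satisfied
    (G : SimpleGraph V) (id : V → ℕ) (hid : Function.Injective id)
    (s : V → Bool) (i : V)
    (hf : Forbidden G id s i) (hr : Removable G s i)
    (s' : V → Bool) (hs'i : s' i = false) (hs' : ∀ j, j ≠ i → s' j = s j) :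
    ¬ Unsatisfied G s' i := by
  rintro (⟨h1, _⟩ | ⟨_, hadd⟩)
  · rw [hs'i] at h1; exact Bool.false_ne_true h1
  · obtain ⟨-, h2⟩ := hr
    rcases h2 i (Or.inl rfl) with ⟨hne, _⟩ | ⟨k, hk, hkne, hks⟩
    · exact hne rfl
    · have := hadd k hk
      rw [hs' k hkne, hks] at this
      simp at this
end

section
/- Characterization of terminal states of Algorithm 1: in a state s, no vertex is Unsatisfied if and only if D(s) = {v | s(v) = true} is a minimal dominating set of G, i.e., D(s) is a dominating set of G and for every i ∈ D(s) the set D(s) \ {i} is not a dominating set of G. -/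
variable {V : Type*} [Fintype V] [DecidableEq V]

/-- `D` is a dominating set of `G`. -/
def IsDomSet (G : SimpleGraph V) (D : Set V) : Prop :=
  ∀ v : V, v ∈ D ∨ ∃ u ∈ D, G.Adj v u

/-- Terminal-state characterization: no vertex is unsatisfied iff
`{v | s v = true}` is a minimal dominating set. -/
theorem no_unsatisfied_iff_minimal_dominating
    (G : SimpleGraph V) (s : V → Bool) :
    (∀ i : V, ¬ Unsatisfied G s i) ↔
      (IsDomSet G {v | s v = true} ∧
        ∀ i ∈ {v | s v = true}, ¬ IsDomSet G ({v | s v = true} \ {i})) := by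
  constructor
  · intro h
    constructor
    · intro v
      by_cases hv : s v = true
      · exact Or.inl hv
      · by_cases hnb : ∃ u ∈ {v | s v = true}, G.Adj v u
        · exact Or.inr hnb
        · exfalso
          apply h v
          right
          refine ⟨by simpa using hv, fun j hj => ?_⟩
          by_contra hsj
          exact hnb ⟨j, by simpa using hsj, hj⟩
    · intro i hi hdom
      apply h i
      left
      refine ⟨hi, fun j hj => ?_⟩
      rcases hdom j with hmem | ⟨u, ⟨hu1, hu2⟩, hadj⟩
      · exact Or.inl ⟨fun hji => hmem.2 (by simpa using hji), hmem.1⟩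
      · exact Or.inr ⟨u, hadj, fun hui => hu2 (by simpa using hui), hu1⟩
  · rintro ⟨hdom, hmin⟩ i (⟨hsi, hrem⟩ | ⟨hsi, hadd⟩)
    · apply hmin i hsi
      intro v
      by_cases hv : v = i
      · subst hv
        rcases hrem v (Or.inl rfl) with ⟨hne, _⟩ | ⟨k, hadj, hk, hsk⟩
        · exact absurd rfl hne
        · exact Or.inr ⟨k, ⟨hsk, by simpa using hk⟩, hadj⟩
      · by_cases hsv : s v = true
        · exact Or.inl ⟨hsv, by simpa using hv⟩
        · rcases hdom v with hmem | ⟨u, hu, hadj⟩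
          · exact absurd hmem hsv
          · by_cases hui : u = i
            · subst hui
              rcases hrem v (Or.inr (G.adj_symm hadj)) with ⟨_, hsv'⟩ | ⟨k, hadj', hk, hsk⟩
              · exact absurd hsv' hsv
              · exact Or.inr ⟨k, ⟨hsk, by simpa using hk⟩, hadj'⟩
            · exact Or.inr ⟨u, ⟨hu, by simpa using hui⟩, hadj⟩
    · rcases hdom i with hmem | ⟨u, hu, hadj⟩
      · simp [hsi] at hmem
      · have := hadd u (G.adj_symm hadj).symm
        simp_all
end

section
/- Every execution of Algorithm 1 has length at most n, where n is the number of vertices of G; that is, any sequence of states s_0, s_1, …, s_T in which each consecutive state is obtained by a move of Algorithm 1 satisfies T ≤ n. -/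
variable {V : Type*} [Fintype V] [DecidableEq V]

/-- Every execution of Algorithm 1 has length at most `n = |V|`. -/
theorem execution_length_le_card
    (G : SimpleGraph V) (id : V → ℕ) (hid : Function.Injective id)
    (T : ℕ) (seq : ℕ → V → Bool)
    (hexec : ∀ t, t < T → Move G id (seq t) (seq (t + 1))) :
    T ≤ Fintype.card V := by
  classical
  rcases Nat.eq_zero_or_pos T with hT | hT
  · simp [hT]
  have hne : Nonempty V := ⟨(hexec 0 hT).choose⟩
  set mover : ℕ → V := fun t => if h : t < T then (hexec t h).choose else hne.some with hm
  have hspec : ∀ t, t < T → Forbidden G id (seq t) (mover t) ∧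
      seq (t+1) (mover t) = !(seq t (mover t)) ∧
      ∀ j, j ≠ mover t → seq (t+1) j = seq t j := by
    intro t ht
    simp only [hm, dif_pos ht]
    exact (hexec t ht).choose_spec
  -- Key claim: a vertex never moves twice.
  have key : ∀ t1 t2, t1 < t2 → t2 < T → mover t1 = mover t2 →
      (∀ t, t1 < t → t < t2 → mover t ≠ mover t1) → False := by
    intro t1 t2 h12 ht2 heq hmin
    have ht1 : t1 < T := lt_trans h12 ht2
    set i := mover t1 with hi
    obtain ⟨F1, flip1, same1⟩ := hspec t1 ht1
    obtain ⟨F2, flip2, same2⟩ := hspec t2 ht2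
    rw [← heq] at F2 flip2 same2
    -- the state of i is constant (and flipped) on (t1, t2]
    have hconst : ∀ t, t1 + 1 ≤ t → t ≤ t2 → seq t i = !(seq t1 i) := by
      intro t ht
      induction t, ht using Nat.le_induction with
      | base => intro _; exact flip1
      | succ t ht ih =>
        intro ht'
        have htlt : t < t2 := by omega
        obtain ⟨_, _, sm⟩ := hspec t (htlt.trans ht2)
        rw [sm i (Ne.symm (hmin t (by omega) htlt))]
        exact ih (by omega)
    rcases Bool.eq_false_or_eq_true (seq t1 i) with hb | hb
    · -- Removable move at t1 : i turns false
      have hrem : Removable G (seq t1) i := by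
        rcases F1.1 with hR | hA
        · exact hR
        · rw [hA.1] at hb; exact absurd hb (by simp)
      have hadd2 : Addable G (seq t2) i := by
        rcases F2.1 with hR | hA
        · exfalso
          have := hR.1
          rw [hconst t2 (by omega) le_rfl, hb] at this
          exact absurd this (by simp)
        · exact hA
      obtain ⟨k0, hk0adj, hk0ne, hk0t⟩ :=
        (hrem.2 i (Or.inl rfl)).resolve_left (fun h => h.1 rfl)
      set P : ℕ → Prop := fun t => ∃ k, G.Adj i k ∧ seq t k = true with hPdef
      have hP1 : P (t1+1) := ⟨k0, hk0adj, by rw [same1 k0 hk0ne]; exact hk0t⟩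
      have hP2 : ¬ P t2 := by
        rintro ⟨k, hk, hkt⟩
        rw [hadd2.2 k hk] at hkt
        exact absurd hkt (by simp)
      have hexd : ∃ d, ¬ P (t1 + 1 + d) :=
        ⟨t2 - (t1+1), by rwa [show t1+1+(t2-(t1+1)) = t2 by omega]⟩
      set d0 := Nat.find hexd with hd0def
      have hd0 : ¬ P (t1+1+d0) := Nat.find_spec hexd
      have hd0pos : 0 < d0 := by
        rcases Nat.eq_zero_or_pos d0 with h | h
        · exfalso; rw [h] at hd0; exact hd0 hP1
        · exact h
      have hd0le : d0 ≤ t2 - (t1+1) :=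
        Nat.find_le (by rwa [show t1+1+(t2-(t1+1)) = t2 by omega])
      set t'' := t1 + d0 with ht''def
      have hPt'' : P t'' := by
        have h := Nat.find_min hexd (show d0 - 1 < d0 by omega)
        rw [show t1+1+(d0-1) = t'' by omega] at h
        exact not_not.mp h
      have hnP : ¬ P (t''+1) := by
        rw [show t''+1 = t1+1+d0 by omega]; exact hd0
      have ht''lt : t'' < t2 := by omega
      obtain ⟨Ft, flipt, samet⟩ := hspec t'' (ht''lt.trans ht2)
      obtain ⟨k, hkadj, hkt⟩ := hPt''
      have hmover : mover t'' = k := by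
        by_contra hc
        exact hnP ⟨k, hkadj, by rw [samet k (fun h => hc h.symm)]; exact hkt⟩
      have hrem'' : Removable G (seq t'') k := by
        have hU := Ft.1
        rw [hmover] at hU
        rcases hU with hR | hA
        · exact hR
        · rw [hA.1] at hkt; exact absurd hkt (by simp)
      rcases hrem''.2 i (Or.inr (G.adj_symm hkadj)) with ⟨_, hit⟩ | ⟨m, hmadj, hmne, hmt⟩
      · have : seq t'' i = false := by
          rw [hconst t'' (by omega) (le_of_lt ht''lt), hb]; rfl
        rw [this] at hit; exact absurd hit (by simp)
      · exact hnP ⟨m, hmadj, by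
          rw [samet m (by rw [hmover]; exact hmne)]; exact hmt⟩
    · -- Addable move at t1 : i turns true, all its neighbors were false
      have hadd : Addable G (seq t1) i := by
        rcases F1.1 with hR | hA
        · rw [hR.1] at hb; exact absurd hb (by simp)
        · exact hA
      -- all neighbors of i remain false on [t1, t2]
      have hnb : ∀ t, t1 ≤ t → t ≤ t2 → ∀ j, G.Adj i j → seq t j = false := by
        intro t ht
        induction t, ht using Nat.le_induction with
        | base => intro _ j hj; exact hadd.2 j hj
        | succ t ht ih =>
          intro ht' j hj
          have htlt : t < t2 := by omega
          have htT : t < T := htlt.trans ht2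
          obtain ⟨Ft, flipt, samet⟩ := hspec t htT
          by_cases hmj : mover t = j
          · exfalso
            have hjf : seq t j = false := ih (by omega) j hj
            have hU := Ft.1
            rw [hmj] at hU
            rcases hU with hR | hA
            · rw [hR.1] at hjf; exact absurd hjf (by simp)
            · -- j Addable at t, but its neighbor i is true (since t > t1)
              have hti : t1 < t := by
                rcases eq_or_lt_of_le ht with h | h
                · exfalso
                  have : mover t1 = j := by rw [h]; exact hmj
                  exact G.ne_of_adj hj (this.symm ▸ rfl : i = j)
                · exact h
              have hit : seq t i = true := by
                rw [hconst t (by omega) (by omega), hb]; rfl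
              have := hA.2 i (G.adj_symm hj)
              rw [this] at hit; exact absurd hit (by simp)
          · rw [samet j (fun h => hmj h.symm)]
            exact ih (by omega) j hj
      -- at t2, i is neither Removable nor Addable
      have hi2 : seq t2 i = true := by
        rw [hconst t2 (by omega) le_rfl, hb]; rfl
      rcases F2.1 with hR | hA
      · obtain ⟨k, hk, _, hkt⟩ := (hR.2 i (Or.inl rfl)).resolve_left (fun h => h.1 rfl)
        rw [hnb t2 (by omega) le_rfl k hk] at hkt
        exact absurd hkt (by simp)
      · rw [hA.1] at hi2; exact absurd hi2 (by simp)
  -- the movers of the T steps are pairwise distinct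
  have hinj : Function.Injective (fun t : Fin T => mover t) := by
    intro a b hab
    by_contra hneq
    simp only at hab
    rcases lt_trichotomy (a : ℕ) (b : ℕ) with h | h | h
    · have hexQ : ∃ t, (a : ℕ) < t ∧ t < T ∧ mover t = mover a := ⟨b, h, b.2, hab.symm⟩
      obtain ⟨h1, h2, h3⟩ := Nat.find_spec hexQ
      exact key a (Nat.find hexQ) h1 h2 h3.symm
        (fun t hta htl hc => Nat.find_min hexQ htl ⟨hta, lt_trans htl h2, hc⟩)
    · exact hneq (Fin.ext h)
    · have hexQ : ∃ t, (b : ℕ) < t ∧ t < T ∧ mover t = mover b := ⟨a, h, a.2, hab⟩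
      obtain ⟨h1, h2, h3⟩ := Nat.find_spec hexQ
      exact key b (Nat.find hexQ) h1 h2 h3.symm
        (fun t hta htl hc => Nat.find_min hexQ htl ⟨hta, lt_trans htl h2, hc⟩)
  calc T = Fintype.card (Fin T) := (Fintype.card_fin T).symm
    _ ≤ Fintype.card V := Fintype.card_le_of_injective _ hinj
end

section
/- Self-stabilization of Algorithm 1: starting from an arbitrary state s_0, every maximal execution of Algorithm 1 (an execution s_0, …, s_T whose final state admits no move, i.e., no vertex is Forbidden in s_T) terminates in a state s_T in which D(s_T) = {v | s_T(v) = true} is a minimal dominating set of G, and T ≤ n where n is the number of vertices of G. -/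
variable {V : Type*} [Fintype V] [DecidableEq V]

/-- Auxiliary invariant: once a vertex has moved, it satisfies this forever. -/
def MovedInv (G : SimpleGraph V) (s : V → Bool) (i : V) : Prop :=
  (s i = true ∧ ∀ j, G.Adj i j → s j = false) ∨
  (s i = false ∧ ∃ k, G.Adj i k ∧ s k = true)

lemma movedinv_not_unsat {G : SimpleGraph V} {s : V → Bool} {i : V}
    (h : MovedInv G s i) : ¬ Unsatisfied G s i := by
  rcases h with ⟨hi, hnb⟩ | ⟨hi, k, hk, hks⟩
  · rintro (⟨_, hall⟩ | ⟨hf, _⟩)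
    · rcases hall i (Or.inl rfl) with ⟨hne, _⟩ | ⟨k, hadj, hkne, hks⟩
      · exact hne rfl
      · simp [hnb k hadj] at hks
    · simp [hi] at hf
  · rintro (⟨ht, _⟩ | ⟨_, hall⟩)
    · simp [hi] at ht
    · simp [hall k hk] at hks

lemma move_preserves_inv {G : SimpleGraph V} {id : V → ℕ} {s s' : V → Bool} {i : V}
    (hm : Move G id s s') (h : MovedInv G s i) : MovedInv G s' i := by
  obtain ⟨m, hforb, hflip, hrest⟩ := hm
  have hmi : m ≠ i := by
    rintro rfl
    exact movedinv_not_unsat h hforb.1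
  have hsi : s' i = s i := hrest i (fun e => hmi e.symm)
  rcases h with ⟨hi, hnb⟩ | ⟨hi, k, hk, hks⟩
  · left
    refine ⟨by rw [hsi, hi], fun j hj => ?_⟩
    have hjm : j ≠ m := by
      rintro rfl
      rcases hforb.1 with ⟨ht, _⟩ | ⟨_, hall⟩
      · simp [hnb j hj] at ht
      · simp [hall i hj.symm] at hi
    rw [hrest j hjm, hnb j hj]
  · right
    refine ⟨by rw [hsi, hi], ?_⟩
    by_cases hkm : k = m
    · subst hkm
      rcases hforb.1 with ⟨_, hall⟩ | ⟨hf, _⟩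
      · rcases hall i (Or.inr hk.symm) with ⟨_, ht⟩ | ⟨u, hu, hum, hus⟩
        · simp [hi] at ht
        · exact ⟨u, hu, by rw [hrest u hum, hus]⟩
      · simp [hf] at hks
    · exact ⟨k, hk, by rw [hrest k hkm, hks]⟩

lemma move_inv_self {G : SimpleGraph V} {id : V → ℕ} {s s' : V → Bool} {i : V}
    (hforb : Forbidden G id s i) (hflip : s' i = !(s i))
    (hrest : ∀ j, j ≠ i → s' j = s j) : MovedInv G s' i := by
  rcases hforb.1 with ⟨ht, hall⟩ | ⟨hf, hall⟩
  · right
    refine ⟨by simp [hflip, ht], ?_⟩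
    rcases hall i (Or.inl rfl) with ⟨hne, _⟩ | ⟨k, hadj, hkne, hks⟩
    · exact absurd rfl hne
    · exact ⟨k, hadj, by rw [hrest k hkne, hks]⟩
  · left
    refine ⟨by simp [hflip, hf], fun j hj => ?_⟩
    rw [hrest j hj.ne', hall j hj]

lemma exists_forbidden_of_unsatisfied {G : SimpleGraph V} {id : V → ℕ}
    (hid : Function.Injective id) {s : V → Bool} {i : V}
    (h : Unsatisfied G s i) : ∃ j, Forbidden G id s j := by
  classical
  have hne : (Finset.univ.filter (fun j => Unsatisfied G s j)).Nonempty :=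
    ⟨i, by simp [h]⟩
  obtain ⟨j, hj, hjmax⟩ := Finset.exists_max_image _ id hne
  simp only [Finset.mem_filter, Finset.mem_univ, true_and] at hj
  refine ⟨j, hj, fun k hk => ?_⟩
  by_cases hku : Unsatisfied G s k
  · right
    have hle : id k ≤ id j := hjmax k (by simp [hku])
    have : id k ≠ id j := fun e => hk.1 (hid e)
    omega
  · exact Or.inl hku

/-- Self-stabilization: any maximal execution of Algorithm 1, from an arbitrary initial
state, ends in a state whose IN-set is a minimal dominating set, within `|V|` moves. -/
theorem self_stabilization
    (G : SimpleGraph V) (id : V → ℕ) (hid : Function.Injective id)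
    (T : ℕ) (seq : ℕ → V → Bool)
    (hexec : ∀ t, t < T → Move G id (seq t) (seq (t + 1)))
    (hmax : ∀ i : V, ¬ Forbidden G id (seq T) i) :
    (IsDomSet G {v | seq T v = true} ∧
      ∀ i ∈ {v | seq T v = true}, ¬ IsDomSet G ({v | seq T v = true} \ {i})) ∧
    T ≤ Fintype.card V := by
  classical
  have hnounsat : ∀ i, ¬ Unsatisfied G (seq T) i := by
    intro i hi
    obtain ⟨j, hj⟩ := exists_forbidden_of_unsatisfied hid hi
    exact hmax j hj
  constructor
  · constructor
    · intro v
      by_cases hv : seq T v = true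
      · exact Or.inl hv
      · right
        have hv' : seq T v = false := by simpa using hv
        have : ¬ Addable G (seq T) v := fun h => hnounsat v (Or.inr h)
        rw [Addable] at this
        push_neg at this
        obtain ⟨j, hadj, hjs⟩ := this hv'
        exact ⟨j, by simpa using hjs, hadj⟩
    · intro i hi hdom
      have : ¬ Removable G (seq T) i := fun h => hnounsat i (Or.inl h)
      rw [Removable] at this
      push_neg at this
      obtain ⟨j, hjmem, hj1, hj2⟩ := this hi
      rcases hdom j with hjin | ⟨u, hu, hadj⟩
      · exact hj1 hjin.2 hjin.1
      · exact hj2 u hadj (fun e => hu.2 e) hu.1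
  · -- each vertex moves at most once
    have hinv : ∀ t (ht : t < T), ∀ u, t < u → u ≤ T →
        MovedInv G (seq u) (Classical.choose (hexec t ht)) := by
      intro t ht
      intro u
      induction u with
      | zero => omega
      | succ v ih =>
        intro hv hvT
        rcases Nat.lt_or_ge t v with h | h
        · exact move_preserves_inv (hexec v (by omega)) (ih h (by omega))
        · have : t = v := by omega
          subst this
          obtain ⟨hforb, hflip, hrest⟩ := Classical.choose_spec (hexec t ht)
          exact move_inv_self hforb hflip hrest
    have hinj : Function.Injective
        (fun t : Fin T => Classical.choose (hexec t.1 t.2)) := by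
      intro a b hab
      simp only at hab
      by_contra hne
      have hne' : a.1 ≠ b.1 := fun e => hne (Fin.ext e)
      rcases Nat.lt_or_ge a.1 b.1 with hlt | hge
      · have h1 := hinv a.1 a.2 b.1 hlt (le_of_lt b.2)
        rw [hab] at h1
        obtain ⟨hforb, _, _⟩ := Classical.choose_spec (hexec b.1 b.2)
        exact movedinv_not_unsat h1 hforb.1
      · have hlt : b.1 < a.1 := by omega
        have h1 := hinv b.1 b.2 a.1 hlt (le_of_lt a.2)
        rw [← hab] at h1
        obtain ⟨hforb, _, _⟩ := Classical.choose_spec (hexec a.1 a.2)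
        exact movedinv_not_unsat h1 hforb.1
    calc T = Fintype.card (Fin T) := (Fintype.card_fin T).symm
      _ ≤ Fintype.card V := Fintype.card_le_of_injective _ hinj
end

section
/- No step-back implies the move bound, stated contrapositively (pigeonhole step of Theorem 2): if x_0, x_1, …, x_T is a sequence of global states in Fin n → Fin m such that each consecutive pair differs in exactly one coordinate, and T ≥ n·(m − 1) + 1, then some process revisits a local state: there exist an index i : Fin n and times t₁ < t₂ ≤ T with x_{t₁}(i) = x_{t₂}(i) and x_t(i) ≠ x_{t₁}(i) for some t with t₁ < t < t₂. -/
/-- Pigeonhole step of Theorem 2: if each step changes exactly one process's local state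
and there are at least `n * (m - 1) + 1` steps, then some process revisits a local
state it previously left. -/
theorem long_execution_revisits_state
    (n m T : ℕ) (hm : 1 ≤ m) (seq : ℕ → Fin n → Fin m)
    (hstep : ∀ t, t < T → ∃ i : Fin n,
      seq (t + 1) i ≠ seq t i ∧ ∀ j : Fin n, j ≠ i → seq (t + 1) j = seq t j)
    (hT : n * (m - 1) + 1 ≤ T) :
    ∃ (i : Fin n) (t₁ t₂ : ℕ), t₁ < t₂ ∧ t₂ ≤ T ∧ seq t₁ i = seq t₂ i ∧
      ∃ t, t₁ < t ∧ t < t₂ ∧ seq t i ≠ seq t₁ i := by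
  classical
  have hT0 : 0 < T := lt_of_lt_of_le (Nat.succ_le_succ (Nat.zero_le _)) hT
  obtain ⟨i0, -, -⟩ := hstep 0 hT0
  haveI : Nonempty (Fin n) := ⟨i0⟩
  set c : ℕ → Fin n := fun t =>
    if h : t < T then (hstep t h).choose else Classical.arbitrary _ with hc
  have hmaps : ∀ a ∈ Finset.range T, c a ∈ (Finset.univ : Finset (Fin n)) :=
    fun a _ => Finset.mem_univ _
  have hcard : (Finset.univ : Finset (Fin n)).card * (m - 1) < (Finset.range T).card := by
    simp only [Finset.card_range, Finset.card_univ, Fintype.card_fin]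
    omega
  obtain ⟨i, -, hi⟩ := Finset.exists_lt_card_fiber_of_mul_lt_card_of_maps_to hmaps hcard
  set C : Finset ℕ := (Finset.range T).filter (fun t => seq (t + 1) i ≠ seq t i) with hC
  have hfib : (Finset.range T).filter (fun t => c t = i) ⊆ C := by
    intro t ht
    simp only [hC, Finset.mem_filter, Finset.mem_range] at ht ⊢
    obtain ⟨htT, hct⟩ := ht
    refine ⟨htT, ?_⟩
    have hspec := (hstep t htT).choose_spec.1
    rw [hc] at hct
    simp only [htT, dif_pos] at hct
    rwa [hct] at hspec
  have hCm : m ≤ C.card := by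
    have := Finset.card_le_card hfib
    omega
  have hCne : C.Nonempty := Finset.card_pos.mp (by omega)
  set t₀ := C.min' hCne with ht0
  set B : Finset ℕ := insert t₀ (C.image (· + 1)) with hB
  have hnotmem : t₀ ∉ C.image (· + 1) := by
    simp only [Finset.mem_image, not_exists]
    rintro t ⟨htC, hteq⟩
    have := C.min'_le t htC
    omega
  have hBcard : m + 1 ≤ B.card := by
    rw [hB, Finset.card_insert_of_notMem hnotmem,
      Finset.card_image_of_injective _ (add_left_injective 1)]
    omega
  have hcoll : ∃ a ∈ B, ∃ b ∈ B, a ≠ b ∧ seq a i = seq b i := by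
    by_contra h
    push_neg at h
    have hinj : Set.InjOn (fun t => seq t i) B := by
      intro a ha b hb hab
      by_contra hne
      exact h a ha b hb hne hab
    have := Finset.card_le_card_of_injOn (fun t => seq t i)
      (fun a _ => Finset.mem_univ _) hinj
    simp only [Finset.card_univ, Fintype.card_fin] at this
    omega
  obtain ⟨a, ha, b, hb, hab, hval⟩ := hcoll
  -- WLOG a < b
  have key : ∀ a b : ℕ, a ∈ B → b ∈ B → a < b → seq a i = seq b i →
      ∃ (i' : Fin n) (t₁ t₂ : ℕ), t₁ < t₂ ∧ t₂ ≤ T ∧ seq t₁ i' = seq t₂ i' ∧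
        ∃ t, t₁ < t ∧ t < t₂ ∧ seq t i' ≠ seq t₁ i' := by
    intro a b ha hb hlt hval
    -- b ≠ t₀, so b = t' + 1 with t' ∈ C
    have hbne : b ≠ t₀ := by
      intro hbeq
      subst hbeq
      rw [hB, Finset.mem_insert] at ha
      rcases ha with rfl | ha
      · exact lt_irrefl _ hlt
      · simp only [Finset.mem_image] at ha
        obtain ⟨t, htC, rfl⟩ := ha
        have := C.min'_le t htC
        omega
    have hbim : b ∈ C.image (· + 1) := by
      rw [hB, Finset.mem_insert] at hb
      tauto
    simp only [Finset.mem_image] at hbim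
    obtain ⟨t', ht'C, rfl⟩ := hbim
    rw [hC, Finset.mem_filter, Finset.mem_range] at ht'C
    obtain ⟨ht'T, ht'ch⟩ := ht'C
    have halt : a < t' := by
      rcases Nat.lt_or_ge a t' with h | h
      · exact h
      · have : a = t' := by omega
        subst this
        exact absurd hval.symm ht'ch
    exact ⟨i, a, t' + 1, hlt, by omega, hval,
      t', halt, by omega, fun hcon => ht'ch (hval ▸ hcon ▸ rfl)⟩
  rcases Nat.lt_or_ge a b with h | h
  · exact key a b ha hb h hval
  · have : b < a := by omega
    exact key b a hb ha this hval.symm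
end
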